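/- Let μ₁ > 0, b = 4/μ₁, and μ(λ) = μ₁ √(λ(b−λ))/(2πλ) for λ ∈ (0, b). Then for every λ ∈ (0, b), the Cauchy principal value of ∫₀^b μ(λ′)/(λ−λ′) dλ′ equals μ₁/2; that is, the limit as ε → 0⁺ of ∫₀^{λ−ε} μ(λ′)/(λ−λ′) dλ′ + ∫_{λ+ε}^{b} μ(λ′)/(λ−λ′) dλ′ exists and equals μ₁/2. -/

import Mathlib

open MeasureTheory Real Filter Set intervalIntegral

private lemma mp_Npos (b lam : ℝ) (hl : 0 < lam) (hlb : lam < b) (y : ℝ) :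
    0 < Real.sqrt (lam*(b-y)) + Real.sqrt (y*(b-lam)) := by
  rcases lt_or_ge y b with h | h
  · have h1 : 0 < Real.sqrt (lam*(b-y)) := Real.sqrt_pos.2 (by nlinarith)
    have h2 : 0 ≤ Real.sqrt (y*(b-lam)) := Real.sqrt_nonneg _
    linarith
  · have h1 : 0 < Real.sqrt (y*(b-lam)) := Real.sqrt_pos.2 (by nlinarith)
    have h2 : 0 ≤ Real.sqrt (lam*(b-y)) := Real.sqrt_nonneg _
    linarith

private noncomputable def mpG (b lam C : ℝ) : ℝ → ℝ := fun y =>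
  2*C*Real.arcsin (Real.sqrt (y/b)) +
    (C*Real.sqrt (lam*(b-lam))/lam) *
      (2*Real.log (Real.sqrt (lam*(b-y)) + Real.sqrt (y*(b-lam))) - Real.log b
        - Real.log (lam - y))

private noncomputable def mpH (b lam C : ℝ) : ℝ → ℝ := fun y =>
  2*C*Real.arcsin (Real.sqrt (y/b)) +
    (C*Real.sqrt (lam*(b-lam))/lam) *
      (2*Real.log (Real.sqrt (lam*(b-y)) + Real.sqrt (y*(b-lam))))

private lemma mpG_eq (b lam C y : ℝ) :
    mpG b lam C y = mpH b lam C y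
      - (C*Real.sqrt (lam*(b-lam))/lam) * Real.log b
      - (C*Real.sqrt (lam*(b-lam))/lam) * Real.log (lam - y) := by
  simp only [mpG, mpH]; ring

private lemma mpG_hasDeriv (b lam C : ℝ) (hb : 0 < b) (hl : 0 < lam) (hlb : lam < b)
    (x : ℝ) (hx : 0 < x) (hxb : x < b) (hxl : x ≠ lam) :
    HasDerivAt (mpG b lam C) (C * Real.sqrt (x*(b-x)) / (x*(lam-x))) x := by
  have hxb0 : (0:ℝ) < x / b := div_pos hx hb
  have hxb1 : x / b < 1 := (div_lt_one hb).2 hxb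
  have hbx : 0 < b - x := by linarith
  have hbl : 0 < b - lam := by linarith
  have hu : 0 < Real.sqrt x := Real.sqrt_pos.2 hx
  have hv : 0 < Real.sqrt (b - x) := Real.sqrt_pos.2 hbx
  have hc : 0 < Real.sqrt lam := Real.sqrt_pos.2 hl
  have hd : 0 < Real.sqrt (b - lam) := Real.sqrt_pos.2 hbl
  have he : 0 < Real.sqrt b := Real.sqrt_pos.2 hb
  have hN : 0 < Real.sqrt (lam*(b-x)) + Real.sqrt (x*(b-lam)) := mp_Npos b lam hl hlb x
  have h1 : HasDerivAt (fun y : ℝ => y / b) (1 / b) x := by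
    simpa using (hasDerivAt_id x).div_const b
  have h2 : HasDerivAt (fun y : ℝ => Real.sqrt (y / b)) (1/(2*Real.sqrt (x/b)) * (1/b)) x :=
    (Real.hasDerivAt_sqrt hxb0.ne').comp x h1
  have hs1 : Real.sqrt (x/b) ≠ -1 := ne_of_gt (lt_of_lt_of_le (by norm_num) (Real.sqrt_nonneg _))
  have hs2 : Real.sqrt (x/b) ≠ 1 := by
    rw [ne_eq, Real.sqrt_eq_one]; exact ne_of_lt hxb1
  have h3 : HasDerivAt (fun y : ℝ => Real.arcsin (Real.sqrt (y/b)))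
      (1 / Real.sqrt (1 - Real.sqrt (x/b)^2) * (1/(2*Real.sqrt (x/b)) * (1/b))) x :=
    by have := (Real.hasDerivAt_arcsin hs1 hs2).comp x h2; exact this
  have hp1 : HasDerivAt (fun y : ℝ => lam * (b - y)) (lam * (-1)) x :=
    (((hasDerivAt_const x b).sub (hasDerivAt_id x)).const_mul lam).congr_deriv (by ring)
  have hp2 : HasDerivAt (fun y : ℝ => Real.sqrt (lam * (b - y)))
      (1/(2*Real.sqrt (lam*(b-x))) * (lam * (-1))) x :=
    (Real.hasDerivAt_sqrt (by positivity)).comp x hp1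
  have hq1 : HasDerivAt (fun y : ℝ => y * (b - lam)) (b - lam) x := by
    simpa using (hasDerivAt_id x).mul_const (b - lam)
  have hq2 : HasDerivAt (fun y : ℝ => Real.sqrt (y * (b - lam)))
      (1/(2*Real.sqrt (x*(b-lam))) * (b - lam)) x :=
    (Real.hasDerivAt_sqrt (by positivity)).comp x hq1
  have hlogN : HasDerivAt (fun y : ℝ =>
      Real.log (Real.sqrt (lam*(b-y)) + Real.sqrt (y*(b-lam))))
      ((1/(2*Real.sqrt (lam*(b-x))) * (lam * (-1)) + 1/(2*Real.sqrt (x*(b-lam))) * (b - lam))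
        / (Real.sqrt (lam*(b-x)) + Real.sqrt (x*(b-lam)))) x :=
    (hp2.add hq2).log hN.ne'
  have hlx : lam - x ≠ 0 := sub_ne_zero.2 (Ne.symm hxl)
  have hlog2 : HasDerivAt (fun y : ℝ => Real.log (lam - y)) ((0 - 1)/(lam - x)) x :=
    (((hasDerivAt_const x lam).sub (hasDerivAt_id x))).log hlx
  have hG := (h3.const_mul (2*C)).add
    ((((hlogN.const_mul 2).sub (hasDerivAt_const x (Real.log b))).sub hlog2).const_mul
      (C*Real.sqrt (lam*(b-lam))/lam))
  refine hG.congr_deriv (Eq.symm ?_)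
  have hu2 : Real.sqrt x ^ 2 = x := Real.sq_sqrt hx.le
  have hv2 : Real.sqrt (b-x) ^ 2 = b - x := Real.sq_sqrt hbx.le
  have hc2 : Real.sqrt lam ^ 2 = lam := Real.sq_sqrt hl.le
  have hd2 : Real.sqrt (b-lam) ^ 2 = b - lam := Real.sq_sqrt hbl.le
  have he2 : Real.sqrt b ^ 2 = b := Real.sq_sqrt hb.le
  have e1 : Real.sqrt (x*(b-x)) = Real.sqrt x * Real.sqrt (b-x) := Real.sqrt_mul hx.le _
  have e2 : Real.sqrt (lam*(b-x)) = Real.sqrt lam * Real.sqrt (b-x) := Real.sqrt_mul hl.le _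
  have e3 : Real.sqrt (x*(b-lam)) = Real.sqrt x * Real.sqrt (b-lam) := Real.sqrt_mul hx.le _
  have e4 : Real.sqrt (lam*(b-lam)) = Real.sqrt lam * Real.sqrt (b-lam) := Real.sqrt_mul hl.le _
  have e5 : Real.sqrt (x/b) = Real.sqrt x / Real.sqrt b := Real.sqrt_div hx.le b
  have e6 : Real.sqrt (1 - Real.sqrt (x/b)^2) = Real.sqrt (b-x) / Real.sqrt b := by
    rw [Real.sq_sqrt hxb0.le, show (1:ℝ) - x/b = (b-x)/b by field_simp]
    exact Real.sqrt_div hbx.le b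
  rw [e6, e1, e2, e3, e4, e5]
  set u := Real.sqrt x with hus
  set v := Real.sqrt (b-x) with hvs
  set c := Real.sqrt lam with hcs
  set d := Real.sqrt (b-lam) with hds
  set e := Real.sqrt b with hes
  rw [← hu2, ← hc2, ← he2]
  have hrel1 : v^2 = e^2 - u^2 := by rw [hu2, hv2, he2]
  have hrel2 : d^2 = e^2 - c^2 := by rw [hc2, hd2, he2]
  have hne : c^2 - u^2 ≠ 0 := by rw [hu2, hc2]; exact sub_ne_zero.2 (Ne.symm hxl)
  have hNne : c*v + u*d ≠ 0 := by positivity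
  rw [← hrel2]
  field_simp
  linear_combination (C*v*c^2)*(hrel1 - hrel2)

private lemma mpG_contAt (b lam C : ℝ) (hb : 0 < b) (hl : 0 < lam) (hlb : lam < b)
    (y : ℝ) (hy : y ≠ lam) : ContinuousAt (mpG b lam C) y := by
  have hN := mp_Npos b lam hl hlb
  have hNc : Continuous (fun z : ℝ => Real.sqrt (lam*(b-z)) + Real.sqrt (z*(b-lam))) := by
    continuity
  apply ContinuousAt.add
  · exact (continuous_const.mul (Real.continuous_arcsin.comp
      (Real.continuous_sqrt.comp (continuous_id.div_const b)))).continuousAt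
  · apply ContinuousAt.mul continuousAt_const
    apply ContinuousAt.sub
    apply ContinuousAt.sub
    · exact (continuousAt_const.mul (hNc.continuousAt.log (hN y).ne'))
    · exact continuousAt_const
    · exact (Real.continuousAt_log (sub_ne_zero.2 (Ne.symm hy))).comp
        ((continuous_const.sub continuous_id).continuousAt)

private lemma mpH_contAt (b lam C : ℝ) (hl : 0 < lam) (hlb : lam < b) :
    ContinuousAt (mpH b lam C) lam := by
  have hN := mp_Npos b lam hl hlb
  have hNc : Continuous (fun z : ℝ => Real.sqrt (lam*(b-z)) + Real.sqrt (z*(b-lam))) := by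
    continuity
  apply ContinuousAt.add
  · exact (continuous_const.mul (Real.continuous_arcsin.comp
      (Real.continuous_sqrt.comp (continuous_id.div_const b)))).continuousAt
  · exact continuousAt_const.mul (continuousAt_const.mul
      (hNc.continuousAt.log (hN lam).ne'))

private lemma mpG_zero (b lam C : ℝ) (hb : 0 < b) (hl : 0 < lam) (hlb : lam < b) :
    mpG b lam C 0 = 0 := by
  have h1 : Real.sqrt ((0:ℝ)/b) = 0 := by simp
  have h2 : Real.sqrt ((0:ℝ)*(b-lam)) = 0 := by simp
  simp only [mpG, h1, h2, sub_zero, add_zero, Real.arcsin_zero]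
  rw [Real.log_sqrt (by positivity), Real.log_mul hl.ne' hb.ne']
  ring

private lemma mpG_b (b lam C : ℝ) (hb : 0 < b) (hl : 0 < lam) (hlb : lam < b) :
    mpG b lam C b = C * Real.pi := by
  have h1 : Real.sqrt (b/b) = 1 := by rw [div_self hb.ne']; exact Real.sqrt_one
  have h2 : Real.sqrt (lam*(b-b)) = 0 := by simp
  have hbl : 0 < b - lam := by linarith
  simp only [mpG, h1, h2, Real.arcsin_one, zero_add]
  rw [Real.log_sqrt (by positivity), Real.log_mul hb.ne' hbl.ne',
    show lam - b = -(b-lam) by ring, Real.log_neg_eq_log]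
  ring

private lemma mp_integrand_cont (b lam C : ℝ) (y : ℝ) (hy0 : y ≠ 0) (hyl : y ≠ lam) :
    ContinuousAt (fun x => C * Real.sqrt (x*(b-x)) / (x*(lam-x))) y := by
  apply ContinuousAt.div
  · exact (continuous_const.mul (Real.continuous_sqrt.comp
      (continuous_id.mul (continuous_const.sub continuous_id)))).continuousAt
  · exact (continuous_id.mul (continuous_const.sub continuous_id)).continuousAt
  · exact mul_ne_zero hy0 (sub_ne_zero.2 (Ne.symm hyl))

private lemma mp_integrable_left (b lam C : ℝ) (hb : 0 < b) (hl : 0 < lam) (hlb : lam < b)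
    (hC : 0 ≤ C) (t : ℝ) (ht0 : 0 ≤ t) (ht : t < lam) :
    IntervalIntegrable (fun x => C * Real.sqrt (x*(b-x)) / (x*(lam-x))) volume 0 t := by
  have hlt : 0 < lam - t := by linarith
  set K : ℝ := C * Real.sqrt b / (lam - t) with hK
  have hKnn : 0 ≤ K := by positivity
  have hint : IntervalIntegrable (fun x : ℝ => K * x ^ (-(1/2) : ℝ)) volume 0 t :=
    (intervalIntegral.intervalIntegrable_rpow' (by norm_num)).const_mul K
  apply hint.mono_fun
  · apply Measurable.aestronglyMeasurable
    apply Measurable.div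
    · exact (measurable_const.mul
        (Real.continuous_sqrt.measurable.comp
          (measurable_id.mul (measurable_const.sub measurable_id))))
    · exact measurable_id.mul (measurable_const.sub measurable_id)
  · have huIoc : Set.uIoc (0:ℝ) t = Set.Ioc 0 t := Set.uIoc_of_le ht0
    rw [huIoc, Filter.EventuallyLE, ae_restrict_iff' measurableSet_Ioc]
    filter_upwards with x hx
    obtain ⟨hx0, hxt⟩ := hx
    have hbx : 0 < b - x := by linarith
    have hlx : 0 < lam - x := by linarith
    have hsx : 0 < Real.sqrt x := Real.sqrt_pos.2 hx0
    have hrp : x ^ (-(1/2) : ℝ) = (Real.sqrt x)⁻¹ := by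
      rw [Real.rpow_neg hx0.le, ← Real.sqrt_eq_rpow]
    have hfnn : 0 ≤ C * Real.sqrt (x*(b-x)) / (x*(lam-x)) := by positivity
    rw [Real.norm_eq_abs, Real.norm_eq_abs, abs_of_nonneg hfnn, abs_of_nonneg (by positivity)]
    rw [hrp, hK]
    have hA : Real.sqrt (x*(b-x)) = Real.sqrt x * Real.sqrt (b-x) := Real.sqrt_mul hx0.le _
    rw [hA]
    have h1 : Real.sqrt (b - x) ≤ Real.sqrt b := Real.sqrt_le_sqrt (by linarith)
    have h2 : lam - t ≤ lam - x := by linarith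
    have goal2 : C * (Real.sqrt x * Real.sqrt (b-x)) / (x*(lam-x))
        ≤ C * Real.sqrt b / ((lam - t) * Real.sqrt x) := by
      rw [div_le_div_iff₀ (by positivity) (by positivity)]
      calc C * (Real.sqrt x * Real.sqrt (b-x)) * ((lam - t) * Real.sqrt x)
          = (C * Real.sqrt (b-x) * (lam - t)) * (Real.sqrt x * Real.sqrt x) := by ring
        _ ≤ (C * Real.sqrt b * (lam - x)) * (Real.sqrt x * Real.sqrt x) := by
            apply mul_le_mul_of_nonneg_right _ (by positivity)
            apply mul_le_mul (mul_le_mul_of_nonneg_left h1 hC) h2 hlt.le (by positivity)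
        _ = C * Real.sqrt b * (x * (lam - x)) := by
            rw [Real.mul_self_sqrt hx0.le]; ring
    calc C * (Real.sqrt x * Real.sqrt (b-x)) / (x*(lam-x))
        ≤ C * Real.sqrt b / ((lam - t) * Real.sqrt x) := goal2
      _ = C * Real.sqrt b / (lam - t) * (Real.sqrt x)⁻¹ := by
          rw [← div_div, div_eq_mul_inv (C * Real.sqrt b / (lam - t))]

theorem marchenko_pastur_principal_value (μ₁ : ℝ) (hμ₁ : 0 < μ₁)
    (b : ℝ) (hb : b = 4 / μ₁)
    (μ : ℝ → ℝ)
    (hμ : ∀ lam : ℝ, μ lam = μ₁ * Real.sqrt (lam * (b - lam)) / (2 * Real.pi * lam)) :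
    ∀ lam ∈ Set.Ioo (0:ℝ) b,
      Filter.Tendsto
        (fun ε : ℝ =>
          (∫ x in (0:ℝ)..(lam - ε), μ x / (lam - x)) +
          ∫ x in (lam + ε)..b, μ x / (lam - x))
        (nhdsWithin 0 (Set.Ioi 0)) (nhds (μ₁ / 2)) := by
  intro lam hlam
  obtain ⟨hl, hlb⟩ := hlam
  have hb0 : 0 < b := by rw [hb]; positivity
  have hπ : 0 < Real.pi := Real.pi_pos
  set C : ℝ := μ₁ / (2*Real.pi) with hC
  have hCpos : 0 < C := by positivity
  set f : ℝ → ℝ := fun x => C * Real.sqrt (x*(b-x)) / (x*(lam-x)) with hfdef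
  have hf : ∀ x, μ x / (lam - x) = f x := by
    intro x; rw [hμ, hfdef, hC]; simp only [div_eq_mul_inv, mul_inv]; ring
  set k : ℝ := C*Real.sqrt (lam*(b-lam))/lam with hk
  -- eventual equality
  have hm : 0 < min lam (b - lam) := lt_min hl (by linarith)
  have hev : ∀ᶠ ε in nhdsWithin (0:ℝ) (Set.Ioi 0),
      ((∫ x in (0:ℝ)..(lam - ε), μ x / (lam - x)) +
        ∫ x in (lam + ε)..b, μ x / (lam - x))
      = μ₁/2 + (mpH b lam C (lam - ε) - mpH b lam C (lam + ε)) := by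
    filter_upwards [Ioo_mem_nhdsGT_of_mem (Set.left_mem_Ico.2 hm)] with ε hε
    obtain ⟨hε0, hεm⟩ := hε
    have hεl : ε < lam := lt_of_lt_of_le hεm (min_le_left _ _)
    have hεb : ε < b - lam := lt_of_lt_of_le hεm (min_le_right _ _)
    simp only [hf]
    have hleft : (∫ x in (0:ℝ)..(lam - ε), f x)
        = mpG b lam C (lam - ε) - mpG b lam C 0 := by
      apply intervalIntegral.integral_eq_sub_of_hasDeriv_right_of_le (by linarith)
      · intro y hy
        obtain ⟨hy0, hy1⟩ := hy
        exact (mpG_contAt b lam C hb0 hl hlb y (ne_of_lt (by linarith))).continuousWithinAt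
      · intro y hy
        obtain ⟨hy0, hy1⟩ := hy
        exact ((mpG_hasDeriv b lam C hb0 hl hlb y hy0 (by linarith) (by linarith))).hasDerivWithinAt
      · exact mp_integrable_left b lam C hb0 hl hlb hCpos.le (lam - ε) (by linarith) (by linarith)
    have hright : (∫ x in (lam + ε)..b, f x)
        = mpG b lam C b - mpG b lam C (lam + ε) := by
      apply intervalIntegral.integral_eq_sub_of_hasDeriv_right_of_le (f := mpG b lam C)
        (by linarith)
      · intro y hy
        obtain ⟨hy0, hy1⟩ := hy
        exact (mpG_contAt b lam C hb0 hl hlb y (ne_of_gt (by linarith))).continuousWithinAt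
      · intro y hy
        obtain ⟨hy0, hy1⟩ := hy
        exact ((mpG_hasDeriv b lam C hb0 hl hlb y (by linarith) hy1 (by linarith))).hasDerivWithinAt
      · apply ContinuousOn.intervalIntegrable
        intro y hy
        rw [Set.uIcc_of_le (by linarith)] at hy
        obtain ⟨hy0, hy1⟩ := hy
        exact (mp_integrand_cont b lam C y (ne_of_gt (by linarith)) (ne_of_gt (by linarith))).continuousWithinAt
    rw [hleft, hright, mpG_zero b lam C hb0 hl hlb, mpG_b b lam C hb0 hl hlb]
    rw [mpG_eq, mpG_eq b lam C (lam + ε)]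
    have l1 : lam - (lam - ε) = ε := by ring
    have l2 : lam - (lam + ε) = -ε := by ring
    rw [l1, l2, Real.log_neg_eq_log]
    have : C * Real.pi = μ₁ / 2 := by
      rw [hC]; field_simp
    rw [this]; ring
  -- limit of the model function
  have h1 : Filter.Tendsto (fun ε : ℝ => lam - ε) (nhdsWithin 0 (Set.Ioi 0)) (nhds lam) := by
    have : Filter.Tendsto (fun ε : ℝ => lam - ε) (nhds 0) (nhds lam) := by
      simpa using (continuous_sub_left lam).tendsto (0:ℝ)
    exact this.mono_left nhdsWithin_le_nhds
  have h2 : Filter.Tendsto (fun ε : ℝ => lam + ε) (nhdsWithin 0 (Set.Ioi 0)) (nhds lam) := by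
    have : Filter.Tendsto (fun ε : ℝ => lam + ε) (nhds 0) (nhds lam) := by
      simpa using (continuous_add_left lam).tendsto (0:ℝ)
    exact this.mono_left nhdsWithin_le_nhds
  have hHc := mpH_contAt b lam C hl hlb
  have hlim : Filter.Tendsto
      (fun ε : ℝ => μ₁/2 + (mpH b lam C (lam - ε) - mpH b lam C (lam + ε)))
      (nhdsWithin 0 (Set.Ioi 0)) (nhds (μ₁/2)) := by
    have := (tendsto_const_nhds (x := μ₁/2) (f := nhdsWithin (0:ℝ) (Set.Ioi 0))).add
      ((hHc.tendsto.comp h1).sub (hHc.tendsto.comp h2))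
    simpa [Function.comp] using this
  exact Filter.Tendsto.congr' (hev.mono fun ε h => h.symm) hlim
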